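/- arXiv:2410.24030 — 3 statements merged into one kernel-verified Lean document; each statement's English description precedes it below -/
import Mathlib

section
/- Let A be an additive category and X, Y, Z objects such that Z ∈ add Y or X ∈ add Y. Then the canonical composition map Hom_A(Y, Z) ⊗_{End_A(Y)} Hom_A(X, Y) → Hom_A(X, Z) is an isomorphism. -/
open CategoryTheory CategoryTheory.Limits

/-- Let `A` be an additive idempotent-complete category and `X, Y, Z`
objects such that `Z ∈ add Y` or `X ∈ add Y`. Then the canonical composition map
`Hom(Y, Z) ⊗_{End Y} Hom(X, Y) → Hom(X, Z)`, `g ⊗ f ↦ f ≫ g`, is an isomorphism; stated via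
the universal property of the balanced tensor product: composition is a universal
`End Y`-balanced biadditive map. -/
theorem statement9 {C : Type} [Category.{0} C] [Preadditive C] [HasFiniteBiproducts C]
    [IsIdempotentComplete C] (X Y Z : C)
    (h : (∃ (n : ℕ) (s : Z ⟶ ⨁ (fun _ : Fin n => Y)) (r : (⨁ (fun _ : Fin n => Y)) ⟶ Z),
            s ≫ r = 𝟙 Z) ∨
         (∃ (n : ℕ) (s : X ⟶ ⨁ (fun _ : Fin n => Y)) (r : (⨁ (fun _ : Fin n => Y)) ⟶ X),
            s ≫ r = 𝟙 X)) :
    ∀ (T : Type) [AddCommGroup T] (β : (Y ⟶ Z) →+ (X ⟶ Y) →+ T),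
      (∀ (g : Y ⟶ Z) (α : End Y) (f : X ⟶ Y), β ((α : Y ⟶ Y) ≫ g) f = β g (f ≫ α)) →
      ∃! γ : (X ⟶ Z) →+ T, ∀ (f : X ⟶ Y) (g : Y ⟶ Z), γ (f ≫ g) = β g f := by
  intro T _ β hb
  obtain ⟨n, s, r, hsr⟩ | ⟨n, s, r, hsr⟩ := h
  · -- Z is a retract of Y^n
    have decomp : ∀ {W : C} (g : W ⟶ Z),
        ∑ i : Fin n, (g ≫ s ≫ biproduct.π (fun _ : Fin n => Y) i) ≫
          (biproduct.ι (fun _ : Fin n => Y) i ≫ r) = g := by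
      intro W g
      simp only [Category.assoc]
      rw [← Preadditive.comp_sum, ← Preadditive.comp_sum]
      simp only [← Category.assoc, ← Preadditive.sum_comp, biproduct.total,
        Category.id_comp, hsr, Category.comp_id]
    refine ⟨AddMonoidHom.mk' (fun t => ∑ i : Fin n,
        β (biproduct.ι (fun _ : Fin n => Y) i ≫ r)
          (t ≫ s ≫ biproduct.π (fun _ : Fin n => Y) i)) ?_, ?_, ?_⟩
    · intro a b
      simp [Preadditive.add_comp, Finset.sum_add_distrib]
    · intro f g
      simp only [AddMonoidHom.mk'_apply]
      have key : ∀ i : Fin n,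
          β (biproduct.ι (fun _ : Fin n => Y) i ≫ r)
            ((f ≫ g) ≫ s ≫ biproduct.π (fun _ : Fin n => Y) i)
          = β ((g ≫ s ≫ biproduct.π (fun _ : Fin n => Y) i) ≫
              (biproduct.ι (fun _ : Fin n => Y) i ≫ r)) f := by
        intro i
        rw [Category.assoc, ← hb _ (g ≫ s ≫ biproduct.π (fun _ : Fin n => Y) i : End Y) f]
      calc ∑ i : Fin n, β (biproduct.ι (fun _ : Fin n => Y) i ≫ r)
            ((f ≫ g) ≫ s ≫ biproduct.π (fun _ : Fin n => Y) i)
          = ∑ i : Fin n, β ((g ≫ s ≫ biproduct.π (fun _ : Fin n => Y) i) ≫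
              (biproduct.ι (fun _ : Fin n => Y) i ≫ r)) f := by
            exact Finset.sum_congr rfl fun i _ => key i
        _ = (β (∑ i : Fin n, (g ≫ s ≫ biproduct.π (fun _ : Fin n => Y) i) ≫
              (biproduct.ι (fun _ : Fin n => Y) i ≫ r))) f := by
            rw [map_sum]; exact (AddMonoidHom.finset_sum_apply _ _ _).symm
        _ = β g f := by rw [decomp g]
    · intro γ' hγ'
      ext t
      conv_lhs => rw [(decomp t).symm]
      rw [map_sum]
      simp only [AddMonoidHom.mk'_apply]
      exact Finset.sum_congr rfl fun i _ => hγ' _ _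
  · -- X is a retract of Y^n
    have decomp : ∀ {W : C} (f : X ⟶ W),
        ∑ i : Fin n, (s ≫ biproduct.π (fun _ : Fin n => Y) i) ≫
          ((biproduct.ι (fun _ : Fin n => Y) i ≫ r) ≫ f) = f := by
      intro W f
      simp only [← Category.assoc, ← Preadditive.sum_comp]
      simp only [Category.assoc]
      rw [← Preadditive.comp_sum]
      simp only [← Category.assoc, ← Preadditive.sum_comp, biproduct.total,
        Category.id_comp, hsr]
      simp [hsr]
    refine ⟨AddMonoidHom.mk' (fun t => ∑ i : Fin n,
        β ((biproduct.ι (fun _ : Fin n => Y) i ≫ r) ≫ t)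
          (s ≫ biproduct.π (fun _ : Fin n => Y) i)) ?_, ?_, ?_⟩
    · intro a b
      simp [Preadditive.comp_add, Finset.sum_add_distrib]
    · intro f g
      simp only [AddMonoidHom.mk'_apply]
      have key : ∀ i : Fin n,
          β ((biproduct.ι (fun _ : Fin n => Y) i ≫ r) ≫ f ≫ g)
            (s ≫ biproduct.π (fun _ : Fin n => Y) i)
          = β g ((s ≫ biproduct.π (fun _ : Fin n => Y) i) ≫
              ((biproduct.ι (fun _ : Fin n => Y) i ≫ r) ≫ f)) := by
        intro i
        rw [← Category.assoc]
        exact hb g ((biproduct.ι (fun _ : Fin n => Y) i ≫ r) ≫ f : End Y) _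
      calc ∑ i : Fin n, β ((biproduct.ι (fun _ : Fin n => Y) i ≫ r) ≫ f ≫ g)
            (s ≫ biproduct.π (fun _ : Fin n => Y) i)
          = ∑ i : Fin n, β g ((s ≫ biproduct.π (fun _ : Fin n => Y) i) ≫
              ((biproduct.ι (fun _ : Fin n => Y) i ≫ r) ≫ f)) := by
            exact Finset.sum_congr rfl fun i _ => key i
        _ = β g (∑ i : Fin n, (s ≫ biproduct.π (fun _ : Fin n => Y) i) ≫
              ((biproduct.ι (fun _ : Fin n => Y) i ≫ r) ≫ f)) := (map_sum _ _ _).symm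
        _ = β g f := by rw [decomp f]
    · intro γ' hγ'
      ext t
      conv_lhs => rw [(decomp t).symm]
      rw [map_sum]
      simp only [AddMonoidHom.mk'_apply]
      exact Finset.sum_congr rfl fun i _ => hγ' _ _
end

section
/- Let Λ be a ring, e₀ an idempotent, and define for a finitely generated right Λ-module M the submodule rad₀(M) as the intersection of all submodules Y ⊆ M such that M·e₀·Λ ⊆ Y and Y is either equal to M or maximal among proper submodules containing M·e₀·Λ. Then for an epimorphism φ : M → N, the following are equivalent: (1) ker φ ⊆ rad₀(M); (2) for any submodule V ⊆ M with M·e₀ ⊆ V and ker φ + V = M one has V = M; (3) whenever α : M' → M is a morphism with M·e₀ ⊆ im α and φ∘α is an epimorphism, α is an epimorphism. -/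
open MulOpposite

/-- The submodule `M·e₀·Λ` of a right `Λ`-module `M`. -/
def eSub (Λ : Type) [Ring Λ] (e₀ : Λ) (M : Type) [AddCommGroup M] [Module Λᵐᵒᵖ M] :
    Submodule Λᵐᵒᵖ M :=
  Submodule.span Λᵐᵒᵖ (Set.range fun m : M => (op e₀) • m)

/-- The relative radical `rad₀(M)`: the intersection of all submodules `Y` containing
`M·e₀·Λ` that are either all of `M` or maximal among proper submodules containing
`M·e₀·Λ`. -/
def rad0 (Λ : Type) [Ring Λ] (e₀ : Λ) (M : Type) [AddCommGroup M] [Module Λᵐᵒᵖ M] :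
    Submodule Λᵐᵒᵖ M :=
  sInf {Y : Submodule Λᵐᵒᵖ M | eSub Λ e₀ M ≤ Y ∧ (Y = ⊤ ∨ IsCoatom Y)}

/-- Let `Λ` be a ring (module-finite over a commutative noetherian local
ring `R`), `e₀ ∈ Λ` an idempotent, and `φ : M → N` an epimorphism of finitely generated
right `Λ`-modules. Then the following are equivalent: (1) `ker φ ⊆ rad₀(M)`;
(2) any submodule `V ⊆ M` with `M·e₀ ⊆ V` and `ker φ + V = M` equals `M`;
(3) any `α : M' → M` with `M·e₀ ⊆ im α` such that `φ∘α` is an epimorphism is an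
epimorphism. -/
theorem statement10 {R Λ : Type} [CommRing R] [IsNoetherianRing R] [IsLocalRing R]
    [Ring Λ] [Algebra R Λ] [Module.Finite R Λ]
    (e₀ : Λ) (he : e₀ * e₀ = e₀)
    (M N : Type) [AddCommGroup M] [Module Λᵐᵒᵖ M] [Module.Finite Λᵐᵒᵖ M]
    [AddCommGroup N] [Module Λᵐᵒᵖ N] [Module.Finite Λᵐᵒᵖ N]
    (φ : M →ₗ[Λᵐᵒᵖ] N) (hφ : Function.Surjective φ) :
    ((LinearMap.ker φ ≤ rad0 Λ e₀ M) ↔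
      (∀ V : Submodule Λᵐᵒᵖ M, (∀ m : M, (op e₀) • m ∈ V) →
        LinearMap.ker φ ⊔ V = ⊤ → V = ⊤)) ∧
    ((∀ V : Submodule Λᵐᵒᵖ M, (∀ m : M, (op e₀) • m ∈ V) →
        LinearMap.ker φ ⊔ V = ⊤ → V = ⊤) ↔
      (∀ (M' : Type) [AddCommGroup M'] [Module Λᵐᵒᵖ M'] [Module.Finite Λᵐᵒᵖ M']
        (α : M' →ₗ[Λᵐᵒᵖ] M), (∀ m : M, (op e₀) • m ∈ LinearMap.range α) →
          Function.Surjective (φ ∘ₗ α) → Function.Surjective α)) := by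
  classical
  -- Λᵐᵒᵖ is a noetherian ring
  haveI : Module.Finite R Λᵐᵒᵖ := Module.Finite.equiv (MulOpposite.opLinearEquiv R)
  haveI : IsNoetherianRing Λᵐᵒᵖ :=
    isNoetherianRing_iff.mpr (isNoetherian_of_tower R (inferInstance : IsNoetherian R Λᵐᵒᵖ))
  haveI : IsNoetherian Λᵐᵒᵖ M := inferInstance
  -- the lattice of submodules of the f.g. module M is coatomic
  haveI : IsCoatomic (Submodule Λᵐᵒᵖ M) :=
    CompleteLattice.coatomic_of_top_compact
      ((Submodule.fg_iff_compact ⊤).mp (Module.finite_def.mp inferInstance))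
  have hsub : ∀ V : Submodule Λᵐᵒᵖ M,
      ((∀ m : M, (op e₀) • m ∈ V) ↔ eSub Λ e₀ M ≤ V) := fun V =>
    ⟨fun h => Submodule.span_le.mpr (Set.range_subset_iff.mpr h),
     fun h m => h (Submodule.subset_span ⟨m, rfl⟩)⟩
  have key : ∀ V : Submodule Λᵐᵒᵖ M,
      (LinearMap.ker φ ⊔ V = ⊤ ↔ Submodule.map φ V = ⊤) := by
    intro V
    rw [sup_comm, ← Submodule.comap_map_eq]
    constructor
    · intro h
      have := congrArg (Submodule.map φ) h
      rwa [Submodule.map_comap_eq_of_surjective hφ, Submodule.map_top,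
        LinearMap.range_eq_top.mpr hφ] at this
    · intro h
      rw [h, Submodule.comap_top]
  constructor
  · constructor
    · intro h V hV hsup
      by_contra hne
      rcases (IsCoatomic.eq_top_or_exists_le_coatom V) with htop | ⟨Y, hY, hVY⟩
      · exact hne htop
      · have hYmem : Y ∈ {Y : Submodule Λᵐᵒᵖ M | eSub Λ e₀ M ≤ Y ∧ (Y = ⊤ ∨ IsCoatom Y)} :=
          ⟨le_trans ((hsub V).mp hV) hVY, Or.inr hY⟩
        have hker : LinearMap.ker φ ≤ Y := h.trans (sInf_le hYmem)
        have : (⊤ : Submodule Λᵐᵒᵖ M) ≤ Y := hsup ▸ sup_le hker hVY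
        exact hY.1 (top_le_iff.mp this)
    · intro h
      refine le_sInf ?_
      rintro Y ⟨hle, hY⟩
      rcases hY with rfl | hco
      · exact le_top
      · by_contra hnle
        have hsup : LinearMap.ker φ ⊔ Y = ⊤ := hco.2 _ (right_lt_sup.mpr hnle)
        exact hco.1 (h Y ((hsub Y).mpr hle) hsup)
  · constructor
    · intro h M' _ _ _ α hα hsurj
      rw [← LinearMap.range_eq_top]
      apply h _ hα
      rw [key, ← LinearMap.range_comp]
      exact LinearMap.range_eq_top.mpr hsurj
    · intro h V hV hsup
      haveI : Module.Finite Λᵐᵒᵖ V := Module.Finite.iff_fg.mpr (IsNoetherian.noetherian V)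
      have hs : Function.Surjective (φ ∘ₗ V.subtype) := by
        rw [← LinearMap.range_eq_top, LinearMap.range_comp, Submodule.range_subtype]
        exact (key V).mp hsup
      have hα : ∀ m : M, (op e₀) • m ∈ LinearMap.range V.subtype := by
        intro m
        rw [Submodule.range_subtype]
        exact hV m
      have hsurj := h V V.subtype hα hs
      refine Submodule.eq_top_iff'.mpr fun x => ?_
      obtain ⟨⟨y, hy⟩, rfl⟩ := hsurj x
      exact hy
end

section
/- Let Λ be a ring, e₀ an idempotent, and rad₀ as defined via submodules containing M·e₀·Λ. If f : X → Y and g : Y → Z are epimorphisms of finitely generated right Λ-modules with ker f ⊆ rad₀(X) and ker g ⊆ rad₀(Y), then ker(g∘f) ⊆ rad₀(X). -/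
open MulOpposite

/-- Let `Λ` be a ring and `e₀` an idempotent. If `f : X → Y` and
`g : Y → Z` are epimorphisms of finitely generated right `Λ`-modules with
`ker f ⊆ rad₀(X)` and `ker g ⊆ rad₀(Y)`, then `ker (g∘f) ⊆ rad₀(X)`. -/
theorem statement11 {Λ : Type} [Ring Λ] (e₀ : Λ) (he : e₀ * e₀ = e₀)
    (X Y Z : Type) [AddCommGroup X] [Module Λᵐᵒᵖ X] [Module.Finite Λᵐᵒᵖ X]
    [AddCommGroup Y] [Module Λᵐᵒᵖ Y] [Module.Finite Λᵐᵒᵖ Y]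
    [AddCommGroup Z] [Module Λᵐᵒᵖ Z] [Module.Finite Λᵐᵒᵖ Z]
    (f : X →ₗ[Λᵐᵒᵖ] Y) (hf : Function.Surjective f)
    (g : Y →ₗ[Λᵐᵒᵖ] Z) (hg : Function.Surjective g)
    (hkf : LinearMap.ker f ≤ rad0 Λ e₀ X) (hkg : LinearMap.ker g ≤ rad0 Λ e₀ Y) :
    LinearMap.ker (g ∘ₗ f) ≤ rad0 Λ e₀ X := by

  intro x hx
  have hgfx : g (f x) = 0 := hx
  -- show x belongs to every submodule in the defining set
  refine (Submodule.mem_sInf).2 ?_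
  rintro W ⟨heW, hW⟩
  rcases hW with rfl | hW
  · trivial
  -- ker f ≤ W
  have hkfW : LinearMap.ker f ≤ W := by
    refine le_trans hkf ?_
    exact sInf_le ⟨heW, Or.inr hW⟩
  -- eSub Y ≤ map f W
  have heY : eSub Λ e₀ Y ≤ Submodule.map f W := by
    refine Submodule.span_le.2 ?_
    rintro _ ⟨m, rfl⟩
    obtain ⟨x', rfl⟩ := hf m
    exact ⟨op e₀ • x', heW (Submodule.subset_span ⟨x', rfl⟩), by simp⟩
  have hfxW : f x ∈ Submodule.map f W := by
    by_cases htop : Submodule.map f W = ⊤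
    · rw [htop]; trivial
    · -- map f W is a coatom
      have hco : IsCoatom (Submodule.map f W) := by
        constructor
        · exact htop
        · intro V hV
          have h1 : W ≤ Submodule.comap f V := Submodule.map_le_iff_le_comap.1 hV.le
          have h2 : W ≠ Submodule.comap f V := by
            intro h
            apply hV.ne
            rw [h, Submodule.map_comap_eq_of_surjective hf]
          have := hW.2 (Submodule.comap f V) (lt_of_le_of_ne h1 h2)
          have : Submodule.map f (Submodule.comap f V) = Submodule.map f ⊤ := by rw [this]
          rwa [Submodule.map_comap_eq_of_surjective hf, Submodule.map_top,
            LinearMap.range_eq_top.2 hf] at this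
      have hrY : rad0 Λ e₀ Y ≤ Submodule.map f W := sInf_le ⟨heY, Or.inr hco⟩
      exact hrY (hkg (by simpa using hgfx))
  have : x ∈ Submodule.comap f (Submodule.map f W) := hfxW
  rwa [Submodule.comap_map_eq, sup_eq_left.2 hkfW] at this
end
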